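/- Let c be a simple-model cost function on the infinite grid graph G with l layers, and let r = (x_r, y_r, z_r) and s = (x_s, y_s, z_s) be vertices of G. For z ∈ {1, …, l} let d_z := dist_{(G,c)}(r, (x_s, y_r, z)) and e_z := dist_{(G,c)}(s, (x_r, y_s, z)). Then dist_{(G,c)}(r, s) = min over z ∈ {1, …, l} of the smaller of the two values d_z + c^↕_z·|y_s − y_r| + c_{z, z_s} and e_z + c^↕_z·|y_s − y_r| + c_{z, z_r}. -/

import Mathlib

/-- Vertices of the infinite grid graph: `(x, y, z)` where `z` is the layer. -/
abbrev Vtx : Type := ℤ × ℤ × ℤ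

/-- Two vertices of the infinite grid graph with layers `1, …, l` are adjacent iff both have
their layer coordinate in `{1, …, l}` and they differ by exactly `1` in exactly one
coordinate.  An edge changing the first coordinate is horizontal, one changing the second
coordinate is vertical, and one changing the third coordinate is a via. -/
def Adj (l : ℤ) (u v : Vtx) : Prop :=
  1 ≤ u.2.2 ∧ u.2.2 ≤ l ∧ 1 ≤ v.2.2 ∧ v.2.2 ≤ l ∧
    |u.1 - v.1| + |u.2.1 - v.2.1| + |u.2.2 - v.2.2| = 1

/-- Simple-model edge cost: a horizontal (resp. vertical) edge on layer `z` costs `ch z`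
(resp. `cv z`) and a via between layers `z` and `z+1` costs `cvia z`. -/
def ecost (ch cv cvia : ℤ → ℝ) (u v : Vtx) : ℝ :=
  if u.1 ≠ v.1 then ch u.2.2
  else if u.2.1 ≠ v.2.1 then cv u.2.2
  else cvia (min u.2.2 v.2.2)

/-- The cost of a walk (given as the list of its vertices) is the sum of its edge costs. -/
def wcost (c : Vtx → Vtx → ℝ) : List Vtx → ℝ
  | [] => 0
  | [_] => 0
  | u :: v :: P => c u v + wcost c (v :: P)

/-- `P` is a walk from `u` to `v` with respect to the adjacency relation `A`. -/
def IsWalkA (A : Vtx → Vtx → Prop) (P : List Vtx) (u v : Vtx) : Prop :=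
  P ≠ [] ∧ P.Chain' A ∧ P.head? = some u ∧ P.getLast? = some v

/-- The distance between two vertices: the infimum cost of a walk between them. -/
noncomputable def gdistA (A : Vtx → Vtx → Prop) (c : Vtx → Vtx → ℝ) (u v : Vtx) : ℝ :=
  sInf { m : ℝ | ∃ P, IsWalkA A P u v ∧ wcost c P = m }

/-- The distance from a vertex to a set of vertices. -/
noncomputable def gdistSetA (A : Vtx → Vtx → Prop) (c : Vtx → Vtx → ℝ) (u : Vtx)
    (T : Set Vtx) : ℝ :=
  sInf { m : ℝ | ∃ P v, v ∈ T ∧ IsWalkA A P u v ∧ wcost c P = m }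

/-- `cviaSum cvia z z'` is the total cost of a stack of vias between layers `z` and `z'`,
i.e. `Σ_{ζ = min z z'}^{max z z' − 1} cvia ζ` (symmetric in `z` and `z'`). -/
noncomputable def cviaSum (cvia : ℤ → ℝ) (z z' : ℤ) : ℝ :=
  ∑ ζ ∈ Finset.Icc (min z z') (max z z' - 1), cvia ζ

section Aux

variable {l : ℤ} {ch cv cvia : ℤ → ℝ}

/-! ### Adjacency basics -/

lemma adj_cases {u v : Vtx} (h : Adj l u v) :
    (1 ≤ u.2.2 ∧ u.2.2 ≤ l ∧ 1 ≤ v.2.2 ∧ v.2.2 ≤ l) ∧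
    ((|u.1 - v.1| = 1 ∧ u.2.1 = v.2.1 ∧ u.2.2 = v.2.2) ∨
     (u.1 = v.1 ∧ |u.2.1 - v.2.1| = 1 ∧ u.2.2 = v.2.2) ∨
     (u.1 = v.1 ∧ u.2.1 = v.2.1 ∧ |u.2.2 - v.2.2| = 1)) := by
  obtain ⟨h1, h2, h3, h4, h5⟩ := h
  refine ⟨⟨h1, h2, h3, h4⟩, ?_⟩
  rw [Int.abs_eq_natAbs, Int.abs_eq_natAbs, Int.abs_eq_natAbs] at h5 ⊢
  omega

lemma Adj.symm' {u v : Vtx} (h : Adj l u v) : Adj l v u := by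
  obtain ⟨h1, h2, h3, h4, h5⟩ := h
  exact ⟨h3, h4, h1, h2, by
    rw [abs_sub_comm v.1 u.1, abs_sub_comm v.2.1 u.2.1, abs_sub_comm v.2.2 u.2.2]; exact h5⟩

lemma ecost_symm {u v : Vtx} (h : Adj l u v) :
    ecost ch cv cvia v u = ecost ch cv cvia u v := by
  obtain ⟨-, hc⟩ := adj_cases h
  rcases hc with ⟨hx, hy, hz⟩ | ⟨hx, hy, hz⟩ | ⟨hx, hy, hz⟩
  · have : u.1 ≠ v.1 := by rw [Int.abs_eq_natAbs] at hx; omega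
    simp [ecost, this, Ne.symm this, hz]
  · have : u.2.1 ≠ v.2.1 := by rw [Int.abs_eq_natAbs] at hy; omega
    simp [ecost, hx, this, Ne.symm this, hz]
  · simp [ecost, hx, hy, min_comm]

/-! ### cviaSum basics -/

noncomputable def SS (cvia : ℤ → ℝ) (z : ℤ) : ℝ := ∑ ζ ∈ Finset.Ico 1 z, cvia ζ

lemma cviaSum_Ico (z z' : ℤ) :
    cviaSum cvia z z' = ∑ ζ ∈ Finset.Ico (min z z') (max z z'), cvia ζ := by
  unfold cviaSum
  congr 1
  ext a
  simp only [Finset.mem_Icc, Finset.mem_Ico]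
  omega

lemma cviaSum_of_le {z z' : ℤ} (h : z ≤ z') :
    cviaSum cvia z z' = ∑ ζ ∈ Finset.Ico z z', cvia ζ := by
  rw [cviaSum_Ico, min_eq_left h, max_eq_right h]

lemma cviaSum_self (z : ℤ) : cviaSum cvia z z = 0 := by
  rw [cviaSum_of_le le_rfl, Finset.Ico_self, Finset.sum_empty]

lemma cviaSum_comm (z z' : ℤ) : cviaSum cvia z z' = cviaSum cvia z' z := by
  rw [cviaSum_Ico, cviaSum_Ico, min_comm, max_comm]

lemma cviaSum_split {a b c : ℤ} (h1 : 1 ≤ a) (h2 : a ≤ b) (h3 : b ≤ c) :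
    cviaSum cvia a b + cviaSum cvia b c = cviaSum cvia a c := by
  rw [cviaSum_of_le h2, cviaSum_of_le h3, cviaSum_of_le (h2.trans h3),
    ← Finset.Ico_union_Ico_eq_Ico h2 h3,
    Finset.sum_union (Finset.Ico_disjoint_Ico_consecutive a b c)]

lemma cviaSum_abs_one {z z' : ℤ} (h : |z - z'| = 1) :
    cviaSum cvia z z' = cvia (min z z') := by
  rw [cviaSum_Ico]
  have : Finset.Ico (min z z') (max z z') = {min z z'} := by
    ext a
    simp only [Finset.mem_Ico, Finset.mem_singleton]
    rw [Int.abs_eq_natAbs] at h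
    omega
  rw [this, Finset.sum_singleton]

section WithPos

variable (hl : 1 ≤ l) (hcvia : ∀ z, 1 ≤ z → z < l → 0 < cvia z)
include hcvia

lemma cviaSum_eq_abs {z z' : ℤ} (h1 : 1 ≤ z) (h2 : z ≤ l) (h3 : 1 ≤ z') (h4 : z' ≤ l) :
    cviaSum cvia z z' = |SS cvia z' - SS cvia z| := by
  have key : ∀ a b : ℤ, 1 ≤ a → a ≤ b → b ≤ l →
      cviaSum cvia a b = SS cvia b - SS cvia a ∧ SS cvia a ≤ SS cvia b := by
    intro a b ha hab hbl
    have hsplit : SS cvia a + ∑ ζ ∈ Finset.Ico a b, cvia ζ = SS cvia b := by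
      unfold SS
      rw [← Finset.Ico_union_Ico_eq_Ico ha hab,
        Finset.sum_union (Finset.Ico_disjoint_Ico_consecutive 1 a b)]
    have hnn : 0 ≤ ∑ ζ ∈ Finset.Ico a b, cvia ζ := by
      apply Finset.sum_nonneg
      intro ζ hζ
      simp only [Finset.mem_Ico] at hζ
      exact (hcvia ζ (le_trans ha hζ.1) (lt_of_lt_of_le hζ.2 hbl)).le
    rw [cviaSum_of_le hab]
    constructor <;> linarith
  rcases le_total z z' with h | h
  · obtain ⟨e, le⟩ := key z z' h1 h h4
    rw [e, abs_of_nonneg (by linarith)]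
  · obtain ⟨e, le⟩ := key z' z h3 h h2
    rw [cviaSum_comm, e, abs_of_nonpos (by linarith), neg_sub]

lemma cviaSum_nonneg {z z' : ℤ} (h1 : 1 ≤ z) (h2 : z ≤ l) (h3 : 1 ≤ z') (h4 : z' ≤ l) :
    0 ≤ cviaSum cvia z z' := by
  rw [cviaSum_eq_abs hcvia h1 h2 h3 h4]; exact abs_nonneg _

lemma cviaSum_triangle {a b z : ℤ} (h1 : 1 ≤ a) (h2 : a ≤ l) (h3 : 1 ≤ b) (h4 : b ≤ l)
    (h5 : 1 ≤ z) (h6 : z ≤ l) :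
    cviaSum cvia a b ≤ cviaSum cvia a z + cviaSum cvia z b := by
  rw [cviaSum_eq_abs hcvia h1 h2 h3 h4, cviaSum_eq_abs hcvia h1 h2 h5 h6,
    cviaSum_eq_abs hcvia h5 h6 h3 h4]
  have := abs_sub_abs_le_abs_sub (SS cvia b - SS cvia z) (SS cvia a - SS cvia z)
  calc |SS cvia b - SS cvia a| = |(SS cvia z - SS cvia a) + (SS cvia b - SS cvia z)| := by
        ring_nf
    _ ≤ |SS cvia z - SS cvia a| + |SS cvia b - SS cvia z| := abs_add_le _ _
  
end WithPos

/-! ### Walk basics -/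

def vvcost (cv : ℤ → ℝ) : List Vtx → ℝ
  | [] => 0
  | [_] => 0
  | u :: v :: P => (if u.2.1 ≠ v.2.1 then cv u.2.2 else 0) + vvcost cv (v :: P)

section Walks

variable (hch : ∀ z, 1 ≤ z → z ≤ l → 0 < ch z)
variable (hcv : ∀ z, 1 ≤ z → z ≤ l → 0 < cv z)
variable (hcvia : ∀ z, 1 ≤ z → z < l → 0 < cvia z)

include hch hcv hcvia in
lemma ecost_pos {u v : Vtx} (h : Adj l u v) : 0 < ecost ch cv cvia u v := by
  obtain ⟨⟨r1, r2, r3, r4⟩, hc⟩ := adj_cases h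
  rcases hc with ⟨hx, hy, hz⟩ | ⟨hx, hy, hz⟩ | ⟨hx, hy, hz⟩
  · have hne : u.1 ≠ v.1 := by rw [Int.abs_eq_natAbs] at hx; omega
    rw [ecost, if_pos hne]; exact hch _ r1 r2
  · have hne : u.2.1 ≠ v.2.1 := by rw [Int.abs_eq_natAbs] at hy; omega
    rw [ecost, if_neg (by omega), if_pos hne]; exact hcv _ r1 r2
  · rw [ecost, if_neg (by omega), if_neg (by omega)]
    rw [Int.abs_eq_natAbs] at hz
    exact hcvia _ (by omega) (by omega)

include hch hcv hcvia in
lemma wcost_nonneg : ∀ P : List Vtx, P.Chain' (Adj l) → 0 ≤ wcost (ecost ch cv cvia) P := by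
  intro P
  induction P with
  | nil => intro _; simp [wcost]
  | cons u P ih =>
    intro hc
    cases P with
    | nil => simp [wcost]
    | cons v Q =>
      rw [List.Chain', List.isChain_cons_cons] at hc
      have := ecost_pos (ch := ch) (cv := cv) (cvia := cvia) hch hcv hcvia hc.1
      have := ih hc.2
      rw [wcost]
      linarith

include hcv in
lemma vvcost_nonneg : ∀ P : List Vtx, P.Chain' (Adj l) → 0 ≤ vvcost cv P := by
  intro P
  induction P with
  | nil => intro _; simp [vvcost]
  | cons u P ih =>
    intro hc
    cases P with
    | nil => simp [vvcost]
    | cons v Q =>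
      rw [List.Chain', List.isChain_cons_cons] at hc
      have h2 := ih hc.2
      rw [vvcost]
      have : 0 ≤ if u.2.1 ≠ v.2.1 then cv u.2.2 else 0 := by
        split
        · exact (hcv _ hc.1.1 hc.1.2.1).le
        · exact le_refl 0
      linarith

lemma walk_head {A : Vtx → Vtx → Prop} {P : List Vtx} {u v : Vtx} (h : IsWalkA A P u v) :
    ∃ t, P = u :: t := by
  obtain ⟨-, -, hh, -⟩ := h
  cases P with
  | nil => simp at hh
  | cons a t => simp at hh; exact ⟨t, by rw [hh]⟩

lemma walk_single {A : Vtx → Vtx → Prop} (u : Vtx) : IsWalkA A [u] u u := by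
  refine ⟨by simp, List.isChain_singleton _, by simp, by simp⟩

lemma walk_cons {A : Vtx → Vtx → Prop} {c : Vtx → Vtx → ℝ} {P : List Vtx} {v w : Vtx}
    (u : Vtx) (h : IsWalkA A P v w) (huv : A u v) :
    IsWalkA A (u :: P) u w ∧ wcost c (u :: P) = c u v + wcost c P := by
  obtain ⟨t, rfl⟩ := walk_head h
  refine ⟨⟨by simp, ?_, by simp, ?_⟩, rfl⟩
  · rw [List.Chain', List.isChain_cons_cons]; exact ⟨huv, h.2.1⟩
  · rw [List.getLast?_cons_cons]; exact h.2.2.2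

lemma walk_trans {A : Vtx → Vtx → Prop} {c : Vtx → Vtx → ℝ} :
    ∀ {P Q : List Vtx} {u v w : Vtx}, IsWalkA A P u v → IsWalkA A Q v w →
    ∃ R, IsWalkA A R u w ∧ wcost c R = wcost c P + wcost c Q := by
  intro P
  induction P with
  | nil => intro Q u v w hP hQ; exact absurd rfl hP.1
  | cons a P ih =>
    intro Q u v w hP hQ
    obtain rfl : a = u := by have := hP.2.2.1; simpa using this
    cases P with
    | nil =>
      obtain rfl : a = v := by have := hP.2.2.2; simpa using this
      exact ⟨Q, hQ, by rw [wcost]; ring⟩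
    | cons b P' =>
      have hc := hP.2.1
      rw [List.Chain', List.isChain_cons_cons] at hc
      have hP' : IsWalkA A (b :: P') b v := by
        refine ⟨by simp, hc.2, by simp, ?_⟩
        have := hP.2.2.2
        rwa [List.getLast?_cons_cons] at this
      obtain ⟨R, hR, hcost⟩ := ih hP' hQ
      obtain ⟨hW, hC⟩ := walk_cons (A := A) (c := c) a hR hc.1
      exact ⟨a :: R, hW, by
        have hhead : R.head? = some b := hR.2.2.1
        rw [hC, hcost, wcost]; ring⟩

/-! ### Reversal -/

lemma wcost_concat {c : Vtx → Vtx → ℝ} :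
    ∀ (Q : List Vtx) (u w : Vtx), Q.getLast? = some w →
      wcost c (Q ++ [u]) = wcost c Q + c w u := by
  intro Q
  induction Q with
  | nil => intro u w h; simp at h
  | cons a Q ih =>
    intro u w h
    cases Q with
    | nil =>
      obtain rfl : a = w := by simpa using h
      simp [wcost]
    | cons b Q' =>
      rw [List.getLast?_cons_cons] at h
      have e1 : wcost c ((a :: b :: Q') ++ [u]) = c a b + wcost c ((b :: Q') ++ [u]) := rfl
      rw [e1, ih u w h, wcost]
      ring

lemma wcost_reverse :
    ∀ (P : List Vtx), P.Chain' (Adj l) →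
      wcost (ecost ch cv cvia) P.reverse = wcost (ecost ch cv cvia) P := by
  intro P
  induction P with
  | nil => intro _; simp
  | cons u P ih =>
    intro hc
    cases P with
    | nil => simp
    | cons v Q =>
      rw [List.Chain', List.isChain_cons_cons] at hc
      have hlast : ((v :: Q).reverse).getLast? = some v := by
        rw [List.getLast?_reverse]; simp
      rw [List.reverse_cons, wcost_concat _ u v hlast, ih hc.2, wcost,
        ecost_symm hc.1]
      ring

lemma walk_reverse {A : Vtx → Vtx → Prop} (hA : ∀ a b, A a b → A b a) {P : List Vtx}
    {u v : Vtx} (h : IsWalkA A P u v) : IsWalkA A P.reverse v u := by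
  refine ⟨by simp [h.1], ?_, ?_, ?_⟩
  · rw [List.Chain', List.isChain_reverse]
    exact h.2.1.imp fun a b hab => hA a b hab
  · rw [List.head?_reverse]; exact h.2.2.2
  · rw [List.getLast?_reverse]; exact h.2.2.1

/-! ### Distance basics -/

lemma castabs (a b : ℤ) : |(a : ℝ) - b| = ((|a - b| : ℤ) : ℝ) := by
  push_cast
  rfl

include hch hcv hcvia in
lemma walkset_bddBelow (u v : Vtx) :
    BddBelow {m : ℝ | ∃ P, IsWalkA (Adj l) P u v ∧ wcost (ecost ch cv cvia) P = m} := by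
  refine ⟨0, fun m hm => ?_⟩
  obtain ⟨P, hP, rfl⟩ := hm
  exact wcost_nonneg hch hcv hcvia P hP.2.1

include hch hcv hcvia in
lemma gdist_le {P : List Vtx} {u v : Vtx} (h : IsWalkA (Adj l) P u v) :
    gdistA (Adj l) (ecost ch cv cvia) u v ≤ wcost (ecost ch cv cvia) P :=
  csInf_le (walkset_bddBelow hch hcv hcvia u v) ⟨P, h, rfl⟩

lemma le_gdist {u v : Vtx} {x : ℝ} (hne : ∃ P, IsWalkA (Adj l) P u v)
    (h : ∀ P, IsWalkA (Adj l) P u v → x ≤ wcost (ecost ch cv cvia) P) :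
    x ≤ gdistA (Adj l) (ecost ch cv cvia) u v := by
  obtain ⟨P0, h0⟩ := hne
  exact le_csInf ⟨_, P0, h0, rfl⟩ (by rintro m ⟨P, hP, rfl⟩; exact h P hP)

lemma gdist_symm (u v : Vtx) :
    gdistA (Adj l) (ecost ch cv cvia) u v = gdistA (Adj l) (ecost ch cv cvia) v u := by
  unfold gdistA
  congr 1
  ext m
  constructor <;> rintro ⟨P, hP, rfl⟩ <;>
    exact ⟨P.reverse, walk_reverse (fun a b h => h.symm') hP,
      (wcost_reverse P hP.2.1)⟩

include hch hcv hcvia in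
lemma gdist_le_add {Q : List Vtx} {u v w : Vtx} (hQ : IsWalkA (Adj l) Q v w)
    (hne : ∃ P, IsWalkA (Adj l) P u v) :
    gdistA (Adj l) (ecost ch cv cvia) u w ≤
      gdistA (Adj l) (ecost ch cv cvia) u v + wcost (ecost ch cv cvia) Q := by
  have key : ∀ P, IsWalkA (Adj l) P u v →
      gdistA (Adj l) (ecost ch cv cvia) u w ≤
        wcost (ecost ch cv cvia) P + wcost (ecost ch cv cvia) Q := by
    intro P hP
    obtain ⟨R, hR, hc⟩ := walk_trans hP hQ
    calc gdistA (Adj l) (ecost ch cv cvia) u w ≤ wcost (ecost ch cv cvia) R :=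
          gdist_le hch hcv hcvia hR
      _ = _ := hc
  have h2 : gdistA (Adj l) (ecost ch cv cvia) u w - wcost (ecost ch cv cvia) Q ≤
      gdistA (Adj l) (ecost ch cv cvia) u v :=
    le_gdist hne (fun P hP => by have := key P hP; linarith)
  linarith

/-! ### Walk constructors -/

omit hch hcv hcvia in
lemma exists_hwalk {z : ℤ} (hz1 : 1 ≤ z) (hz2 : z ≤ l) :
    ∀ (n : ℕ) (x x' y : ℤ), (x' - x).natAbs = n →
    ∃ P, IsWalkA (Adj l) P (x, y, z) (x', y, z) ∧
      wcost (ecost ch cv cvia) P = ch z * |(x : ℝ) - x'| := by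
  intro n
  induction n with
  | zero =>
    intro x x' y h
    obtain rfl : x = x' := by omega
    exact ⟨[(x, y, z)], walk_single _, by simp [wcost]⟩
  | succ n ih =>
    intro x x' y h
    set d : ℤ := if x < x' then 1 else -1 with hd
    have hd' : (x' - (x + d)).natAbs = n := by
      rw [hd]; split <;> omega
    obtain ⟨P, hP, hc⟩ := ih (x + d) x' y hd'
    have hadj : Adj l (x, y, z) (x + d, y, z) := by
      refine ⟨hz1, hz2, hz1, hz2, ?_⟩
      simp only
      rw [hd]
      split <;> simp
    obtain ⟨hW, hC⟩ := walk_cons (c := ecost ch cv cvia) (x, y, z) hP hadj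
    refine ⟨_, hW, ?_⟩
    rw [hC, hc]
    have hne : x ≠ x + d := by rw [hd]; split <;> omega
    have he : ecost ch cv cvia (x, y, z) (x + d, y, z) = ch z := by
      rw [ecost, if_pos]
      simpa using hne
    rw [he, castabs, castabs]
    have : |x - x'| = 1 + |x + d - x'| := by
      rw [Int.abs_eq_natAbs, Int.abs_eq_natAbs, hd]
      split <;> omega
    rw [this]
    push_cast
    ring

omit hch hcv hcvia in
lemma exists_vwalk {z : ℤ} (hz1 : 1 ≤ z) (hz2 : z ≤ l) :
    ∀ (n : ℕ) (y y' x : ℤ), (y' - y).natAbs = n →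
    ∃ P, IsWalkA (Adj l) P (x, y, z) (x, y', z) ∧
      wcost (ecost ch cv cvia) P = cv z * |(y : ℝ) - y'| := by
  intro n
  induction n with
  | zero =>
    intro y y' x h
    obtain rfl : y = y' := by omega
    exact ⟨[(x, y, z)], walk_single _, by simp [wcost]⟩
  | succ n ih =>
    intro y y' x h
    set d : ℤ := if y < y' then 1 else -1 with hd
    have hd' : (y' - (y + d)).natAbs = n := by
      rw [hd]; split <;> omega
    obtain ⟨P, hP, hc⟩ := ih (y + d) y' x hd'
    have hadj : Adj l (x, y, z) (x, y + d, z) := by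
      refine ⟨hz1, hz2, hz1, hz2, ?_⟩
      simp only
      rw [hd]
      split <;> simp
    obtain ⟨hW, hC⟩ := walk_cons (c := ecost ch cv cvia) (x, y, z) hP hadj
    refine ⟨_, hW, ?_⟩
    rw [hC, hc]
    have hne : y ≠ y + d := by rw [hd]; split <;> omega
    have he : ecost ch cv cvia (x, y, z) (x, y + d, z) = cv z := by
      rw [ecost, if_neg (by simp), if_pos]
      simpa using hne
    rw [he, castabs, castabs]
    have : |y - y'| = 1 + |y + d - y'| := by
      rw [Int.abs_eq_natAbs, Int.abs_eq_natAbs, hd]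
      split <;> omega
    rw [this]
    push_cast
    ring

omit hch hcv hcvia in
lemma exists_viawalk :
    ∀ (n : ℕ) (z z' x y : ℤ), 1 ≤ z → z ≤ l → 1 ≤ z' → z' ≤ l → (z' - z).natAbs = n →
    ∃ P, IsWalkA (Adj l) P (x, y, z) (x, y, z') ∧
      wcost (ecost ch cv cvia) P = cviaSum cvia z z' := by
  intro n
  induction n with
  | zero =>
    intro z z' x y h1 h2 h3 h4 h
    obtain rfl : z = z' := by omega
    exact ⟨[(x, y, z)], walk_single _, by simp [wcost, cviaSum_self]⟩
  | succ n ih =>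
    intro z z' x y h1 h2 h3 h4 h
    set d : ℤ := if z < z' then 1 else -1 with hd
    have hd' : (z' - (z + d)).natAbs = n := by
      rw [hd]; split <;> omega
    have hr1 : 1 ≤ z + d := by rw [hd]; split <;> omega
    have hr2 : z + d ≤ l := by rw [hd]; split <;> omega
    obtain ⟨P, hP, hc⟩ := ih (z + d) z' x y hr1 hr2 h3 h4 hd'
    have hadj : Adj l (x, y, z) (x, y, z + d) := by
      refine ⟨h1, h2, hr1, hr2, ?_⟩
      simp only
      rw [hd]
      split <;> simp
    obtain ⟨hW, hC⟩ := walk_cons (c := ecost ch cv cvia) (x, y, z) hP hadj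
    refine ⟨_, hW, ?_⟩
    rw [hC, hc]
    have he : ecost ch cv cvia (x, y, z) (x, y, z + d) = cvia (min z (z + d)) := by
      rw [ecost, if_neg (by simp), if_neg (by simp)]
    rw [he, ← cviaSum_abs_one (cvia := cvia) (z := z) (z' := z + d) (by rw [hd]; split <;> simp)]
    rcases lt_or_ge z z' with hlt | hle
    · have hd1 : d = 1 := by rw [hd, if_pos hlt]
      rw [hd1]
      exact cviaSum_split h1 (by omega) (by omega)
    · have hd1 : d = -1 := by
        rw [hd, if_neg (not_lt.mpr hle)]
      rw [hd1]
      have hzz : z' < z := by omega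
      rw [cviaSum_comm z (z + -1), cviaSum_comm (z + -1) z', cviaSum_comm z z', add_comm]
      exact cviaSum_split h3 (by omega) (by omega)

/-! ### Flat (2D) lower bound -/

lemma abs_cast_le_succ {a b c : ℤ} (h : |a - b| = 1) :
    |(a : ℝ) - c| ≤ |(b : ℝ) - c| + 1 := by
  rw [castabs, castabs]
  have : |a - c| ≤ |b - c| + 1 := by
    rw [Int.abs_eq_natAbs] at h ⊢
    rw [Int.abs_eq_natAbs]
    omega
  exact_mod_cast this

include hch hcvia in
lemma flat_lb :
    ∀ (P : List Vtx) (u v : Vtx), P.Chain' (Adj l) → P.head? = some u →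
      P.getLast? = some v → 1 ≤ u.2.2 → u.2.2 ≤ l → 1 ≤ v.2.2 → v.2.2 ≤ l →
    ∃ ζ, 1 ≤ ζ ∧ ζ ≤ l ∧
      cviaSum cvia u.2.2 ζ + ch ζ * |(u.1 : ℝ) - v.1| + cviaSum cvia ζ v.2.2 ≤
        wcost (ecost ch cv cvia) P - vvcost cv P := by
  intro P
  induction P with
  | nil => intro u v _ hh; simp at hh
  | cons w Q ih =>
    intro u v hchain hh hlast hu1 hu2 hv1 hv2
    obtain rfl : w = u := by simpa using hh
    cases Q with
    | nil =>
      obtain rfl : w = v := by simpa using hlast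
      exact ⟨w.2.2, hu1, hu2, by simp [wcost, vvcost, cviaSum_self]⟩
    | cons w' rest =>
      rw [List.Chain', List.isChain_cons_cons] at hchain
      have hadj := hchain.1
      have hlast' : (w' :: rest).getLast? = some v := by
        rwa [List.getLast?_cons_cons] at hlast
      have hw'1 : 1 ≤ w'.2.2 := hadj.2.2.1
      have hw'2 : w'.2.2 ≤ l := hadj.2.2.2.1
      obtain ⟨ζ, hζ1, hζ2, hih⟩ := ih w' v hchain.2 (by simp) hlast' hw'1 hw'2 hv1 hv2
      have hwc : wcost (ecost ch cv cvia) (w :: w' :: rest) =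
          ecost ch cv cvia w w' + wcost (ecost ch cv cvia) (w' :: rest) := rfl
      have hvv : vvcost cv (w :: w' :: rest) =
          (if w.2.1 ≠ w'.2.1 then cv w.2.2 else 0) + vvcost cv (w' :: rest) := rfl
      obtain ⟨-, hx | hy | hz⟩ := adj_cases hadj
      · -- horizontal edge
        obtain ⟨hx1, hy1, hz1⟩ := hx
        have hxne : w.1 ≠ w'.1 := by rw [Int.abs_eq_natAbs] at hx1; omega
        have he : ecost ch cv cvia w w' = ch w.2.2 := by rw [ecost, if_pos hxne]
        have habs : |(w.1 : ℝ) - v.1| ≤ |(w'.1 : ℝ) - v.1| + 1 := abs_cast_le_succ hx1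
        have hpos : (0 : ℝ) ≤ ch w.2.2 := (hch _ hu1 hu2).le
        rw [← hz1] at hih
        by_cases hcc : ch w.2.2 < ch ζ
        · refine ⟨w.2.2, hu1, hu2, ?_⟩
          have tri : cviaSum cvia w.2.2 v.2.2 ≤
              cviaSum cvia w.2.2 ζ + cviaSum cvia ζ v.2.2 :=
            cviaSum_triangle hcvia hu1 hu2 hv1 hv2 hζ1 hζ2
          have m1 : ch w.2.2 * |(w.1 : ℝ) - v.1| ≤
              ch w.2.2 * (|(w'.1 : ℝ) - v.1| + 1) :=
            mul_le_mul_of_nonneg_left habs hpos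
          have m2 : ch w.2.2 * |(w'.1 : ℝ) - v.1| ≤ ch ζ * |(w'.1 : ℝ) - v.1| :=
            mul_le_mul_of_nonneg_right hcc.le (abs_nonneg _)
          rw [hwc, hvv, he, if_neg (by omega), cviaSum_self]
          nlinarith [hih]
        · refine ⟨ζ, hζ1, hζ2, ?_⟩
          have hpos2 : (0 : ℝ) ≤ ch ζ := (hch _ hζ1 hζ2).le
          have m1 : ch ζ * |(w.1 : ℝ) - v.1| ≤ ch ζ * (|(w'.1 : ℝ) - v.1| + 1) :=
            mul_le_mul_of_nonneg_left habs hpos2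
          rw [hwc, hvv, he, if_neg (by omega)]
          push_neg at hcc
          nlinarith [hih]
      · -- vertical edge
        obtain ⟨hx1, hy1, hz1⟩ := hy
        have hyne : w.2.1 ≠ w'.2.1 := by rw [Int.abs_eq_natAbs] at hy1; omega
        have he : ecost ch cv cvia w w' = cv w.2.2 := by
          rw [ecost, if_neg (by omega), if_pos hyne]
        refine ⟨ζ, hζ1, hζ2, ?_⟩
        rw [← hx1, ← hz1] at hih
        rw [hwc, hvv, he, if_pos hyne]
        linarith [hih]
      · -- via edge
        obtain ⟨hx1, hy1, hz1⟩ := hz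
        have he : ecost ch cv cvia w w' = cviaSum cvia w.2.2 w'.2.2 := by
          rw [ecost, if_neg (by omega), if_neg (by omega)]
          exact (cviaSum_abs_one hz1).symm
        refine ⟨ζ, hζ1, hζ2, ?_⟩
        have tri : cviaSum cvia w.2.2 ζ ≤
            cviaSum cvia w.2.2 w'.2.2 + cviaSum cvia w'.2.2 ζ :=
          cviaSum_triangle hcvia hu1 hu2 hζ1 hζ2 hw'1 hw'2
        rw [← hx1] at hih
        rw [hwc, hvv, he, if_neg (by omega)]
        linarith [hih]

/-! ### Key structural lower bound -/

include hch hcv hcvia in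
lemma key_lb :
    ∀ (P : List Vtx) (u v : Vtx), P.Chain' (Adj l) → P.head? = some u →
      P.getLast? = some v → 1 ≤ v.2.2 → v.2.2 ≤ l → u.2.1 ≠ v.2.1 →
    ∃ (z ζ1 ζ2 xp : ℤ), (1 ≤ z ∧ z ≤ l) ∧ (1 ≤ ζ1 ∧ ζ1 ≤ l) ∧ (1 ≤ ζ2 ∧ ζ2 ≤ l) ∧
      ((cviaSum cvia u.2.2 ζ1 + ch ζ1 * |(u.1 : ℝ) - xp| + cviaSum cvia ζ1 z) +
        (cviaSum cvia z ζ2 + ch ζ2 * |(xp : ℝ) - v.1| + cviaSum cvia ζ2 v.2.2) ≤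
        wcost (ecost ch cv cvia) P - vvcost cv P) ∧
      (∀ t : ℝ, 0 ≤ t → t ≤ cv z → t * |(u.2.1 : ℝ) - v.2.1| ≤ vvcost cv P) := by
  intro P
  induction P with
  | nil => intro u v _ hh; simp at hh
  | cons w Q ih =>
    intro u v hchain hh hlast hv1 hv2 hne
    obtain rfl : w = u := by simpa using hh
    cases Q with
    | nil =>
      obtain rfl : w = v := by simpa using hlast
      exact absurd rfl hne
    | cons w' rest =>
      rw [List.Chain', List.isChain_cons_cons] at hchain
      have hadj := hchain.1
      have hlast' : (w' :: rest).getLast? = some v := by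
        rwa [List.getLast?_cons_cons] at hlast
      have hu1 : 1 ≤ w.2.2 := hadj.1
      have hu2 : w.2.2 ≤ l := hadj.2.1
      have hw'1 : 1 ≤ w'.2.2 := hadj.2.2.1
      have hw'2 : w'.2.2 ≤ l := hadj.2.2.2.1
      have hwc : wcost (ecost ch cv cvia) (w :: w' :: rest) =
          ecost ch cv cvia w w' + wcost (ecost ch cv cvia) (w' :: rest) := rfl
      have hvv : vvcost cv (w :: w' :: rest) =
          (if w.2.1 ≠ w'.2.1 then cv w.2.2 else 0) + vvcost cv (w' :: rest) := rfl
      have hvvnn : 0 ≤ vvcost cv (w' :: rest) := vvcost_nonneg hcv _ hchain.2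
      obtain ⟨-, hx | hy | hz⟩ := adj_cases hadj
      · -- horizontal edge
        obtain ⟨hx1, hy1, hz1⟩ := hx
        have hxne : w.1 ≠ w'.1 := by rw [Int.abs_eq_natAbs] at hx1; omega
        have he : ecost ch cv cvia w w' = ch w.2.2 := by rw [ecost, if_pos hxne]
        have hpos : (0 : ℝ) ≤ ch w.2.2 := (hch _ hu1 hu2).le
        obtain ⟨z, ζ1, ζ2, xp, hzr, hζ1r, hζ2r, main, C⟩ :=
          ih w' v hchain.2 (by simp) hlast' hv1 hv2 (by rw [← hy1]; exact hne)
        rw [← hz1] at main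
        by_cases hcc : ch w.2.2 < ch ζ1
        · -- switch ζ1 to the current (cheaper) layer
          refine ⟨z, w.2.2, ζ2, xp, hzr, ⟨hu1, hu2⟩, hζ2r, ?_, ?_⟩
          · have tri : cviaSum cvia w.2.2 z ≤
                cviaSum cvia w.2.2 ζ1 + cviaSum cvia ζ1 z :=
              cviaSum_triangle hcvia hu1 hu2 hzr.1 hzr.2 hζ1r.1 hζ1r.2
            have habs : |(w.1 : ℝ) - xp| ≤ |(w'.1 : ℝ) - xp| + 1 := abs_cast_le_succ hx1
            have m1 : ch w.2.2 * |(w.1 : ℝ) - xp| ≤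
                ch w.2.2 * (|(w'.1 : ℝ) - xp| + 1) := mul_le_mul_of_nonneg_left habs hpos
            have m2 : ch w.2.2 * |(w'.1 : ℝ) - xp| ≤ ch ζ1 * |(w'.1 : ℝ) - xp| :=
              mul_le_mul_of_nonneg_right hcc.le (abs_nonneg _)
            rw [hwc, hvv, he, if_neg (by omega), cviaSum_self]
            nlinarith [main]
          · intro t ht1 ht2
            rw [hvv, if_neg (by omega), hy1]
            have := C t ht1 ht2
            linarith
        · refine ⟨z, ζ1, ζ2, xp, hzr, hζ1r, hζ2r, ?_, ?_⟩
          · have habs : |(w.1 : ℝ) - xp| ≤ |(w'.1 : ℝ) - xp| + 1 := abs_cast_le_succ hx1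
            have hpos2 : (0 : ℝ) ≤ ch ζ1 := (hch _ hζ1r.1 hζ1r.2).le
            have m1 : ch ζ1 * |(w.1 : ℝ) - xp| ≤ ch ζ1 * (|(w'.1 : ℝ) - xp| + 1) :=
              mul_le_mul_of_nonneg_left habs hpos2
            rw [hwc, hvv, he, if_neg (by omega)]
            push_neg at hcc
            nlinarith [main]
          · intro t ht1 ht2
            rw [hvv, if_neg (by omega), hy1]
            have := C t ht1 ht2
            linarith
      · -- vertical edge
        obtain ⟨hx1, hy1, hz1⟩ := hy
        have hyne : w.2.1 ≠ w'.2.1 := by rw [Int.abs_eq_natAbs] at hy1; omega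
        have he : ecost ch cv cvia w w' = cv w.2.2 := by
          rw [ecost, if_neg (by omega), if_pos hyne]
        have habsy : |(w.2.1 : ℝ) - v.2.1| ≤ |(w'.2.1 : ℝ) - v.2.1| + 1 :=
          abs_cast_le_succ hy1
        by_cases hyv : w'.2.1 = v.2.1
        · -- last needed vertical step
          obtain ⟨ζ, hζa, hζb, hflat⟩ :=
            flat_lb hch hcvia (w' :: rest) w' v hchain.2 (by simp) hlast' hw'1 hw'2 hv1 hv2
          refine ⟨w.2.2, w.2.2, ζ, w.1, ⟨hu1, hu2⟩, ⟨hu1, hu2⟩, ⟨hζa, hζb⟩, ?_, ?_⟩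
          · rw [← hz1, ← hx1] at hflat
            rw [hwc, hvv, he, if_pos hyne, cviaSum_self]
            simp only [sub_self, abs_zero]
            linarith [hflat]
          · intro t ht1 ht2
            have hone : |(w.2.1 : ℝ) - v.2.1| = 1 := by
              rw [castabs]
              rw [← hyv, Int.abs_eq_natAbs] at *
              norm_cast
              omega
            rw [hvv, if_pos hyne, hone, mul_one]
            linarith
        · obtain ⟨z, ζ1, ζ2, xp, hzr, hζ1r, hζ2r, main, C⟩ :=
            ih w' v hchain.2 (by simp) hlast' hv1 hv2 hyv
          by_cases hcc : cv w.2.2 < cv z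
          · -- switch the vertical layer to the current (cheaper) one
            obtain ⟨ζ, hζa, hζb, hflat⟩ :=
              flat_lb hch hcvia (w' :: rest) w' v hchain.2 (by simp) hlast' hw'1 hw'2 hv1 hv2
            refine ⟨w.2.2, w.2.2, ζ, w.1, ⟨hu1, hu2⟩, ⟨hu1, hu2⟩, ⟨hζa, hζb⟩, ?_, ?_⟩
            · rw [← hz1, ← hx1] at hflat
              rw [hwc, hvv, he, if_pos hyne, cviaSum_self]
              simp only [sub_self, abs_zero]
              linarith [hflat]
            · intro t ht1 ht2
              have hC := C t ht1 (by linarith)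
              have m1 : t * |(w.2.1 : ℝ) - v.2.1| ≤ t * (|(w'.2.1 : ℝ) - v.2.1| + 1) :=
                mul_le_mul_of_nonneg_left habsy ht1
              rw [mul_add, mul_one] at m1
              rw [hvv, if_pos hyne]
              linarith
          · refine ⟨z, ζ1, ζ2, xp, hzr, hζ1r, hζ2r, ?_, ?_⟩
            · rw [← hz1, ← hx1] at main
              rw [hwc, hvv, he, if_pos hyne]
              linarith [main]
            · intro t ht1 ht2
              have hC := C t ht1 ht2
              have m1 : t * |(w.2.1 : ℝ) - v.2.1| ≤ t * (|(w'.2.1 : ℝ) - v.2.1| + 1) :=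
                mul_le_mul_of_nonneg_left habsy ht1
              rw [mul_add, mul_one] at m1
              rw [hvv, if_pos hyne]
              push_neg at hcc
              linarith
      · -- via edge
        obtain ⟨hx1, hy1, hz1⟩ := hz
        have he : ecost ch cv cvia w w' = cviaSum cvia w.2.2 w'.2.2 := by
          rw [ecost, if_neg (by omega), if_neg (by omega)]
          exact (cviaSum_abs_one hz1).symm
        obtain ⟨z, ζ1, ζ2, xp, hzr, hζ1r, hζ2r, main, C⟩ :=
          ih w' v hchain.2 (by simp) hlast' hv1 hv2 (by rw [← hy1]; exact hne)
        refine ⟨z, ζ1, ζ2, xp, hzr, hζ1r, hζ2r, ?_, ?_⟩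
        · have tri : cviaSum cvia w.2.2 ζ1 ≤
              cviaSum cvia w.2.2 w'.2.2 + cviaSum cvia w'.2.2 ζ1 :=
            cviaSum_triangle hcvia hu1 hu2 hζ1r.1 hζ1r.2 hw'1 hw'2
          rw [← hx1] at main
          rw [hwc, hvv, he, if_neg (by omega)]
          linarith [main]
        · intro t ht1 ht2
          rw [hvv, if_neg (by omega), hy1]
          linarith [C t ht1 ht2]

/-! ### Upper-bound walks -/

omit hch hcv hcvia in
lemma exists_walk_any {u v : Vtx} (hu1 : 1 ≤ u.2.2) (hu2 : u.2.2 ≤ l)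
    (hv1 : 1 ≤ v.2.2) (hv2 : v.2.2 ≤ l) : ∃ P, IsWalkA (Adj l) P u v := by
  have z0 : ℤ → ℝ := fun _ => 0
  obtain ⟨P1, hP1, -⟩ := exists_hwalk (ch := fun _ => (0:ℝ)) (cv := fun _ => (0:ℝ))
    (cvia := fun _ => (0:ℝ)) hu1 hu2 ((v.1 - u.1).natAbs) u.1 v.1 u.2.1 rfl
  obtain ⟨P2, hP2, -⟩ := exists_vwalk (ch := fun _ => (0:ℝ)) (cv := fun _ => (0:ℝ))
    (cvia := fun _ => (0:ℝ)) hu1 hu2 ((v.2.1 - u.2.1).natAbs) u.2.1 v.2.1 v.1 rfl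
  obtain ⟨P3, hP3, -⟩ := exists_viawalk (ch := fun _ => (0:ℝ)) (cv := fun _ => (0:ℝ))
    (cvia := fun _ => (0:ℝ)) ((v.2.2 - u.2.2).natAbs) u.2.2 v.2.2 v.1 v.2.1 hu1 hu2 hv1 hv2 rfl
  obtain ⟨R1, hR1, -⟩ := walk_trans (c := fun _ _ => (0:ℝ)) hP1 hP2
  obtain ⟨R2, hR2, -⟩ := walk_trans (c := fun _ _ => (0:ℝ)) hR1 hP3
  exact ⟨R2, hR2⟩

include hch hcv hcvia in
lemma gdist_le_L {a : Vtx} {ζ z : ℤ} (ha1 : 1 ≤ a.2.2) (ha2 : a.2.2 ≤ l)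
    (hζ1 : 1 ≤ ζ) (hζ2 : ζ ≤ l) (hz1 : 1 ≤ z) (hz2 : z ≤ l) (x' : ℤ) :
    gdistA (Adj l) (ecost ch cv cvia) a (x', a.2.1, z) ≤
      cviaSum cvia a.2.2 ζ + ch ζ * |(a.1 : ℝ) - x'| + cviaSum cvia ζ z := by
  obtain ⟨P1, hP1, hc1⟩ := exists_viawalk (ch := ch) (cv := cv) (cvia := cvia)
    ((ζ - a.2.2).natAbs) a.2.2 ζ a.1 a.2.1 ha1 ha2 hζ1 hζ2 rfl
  obtain ⟨P2, hP2, hc2⟩ := exists_hwalk (cv := cv) (cvia := cvia) hζ1 hζ2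
    ((x' - a.1).natAbs) a.1 x' a.2.1 rfl
  obtain ⟨P3, hP3, hc3⟩ := exists_viawalk (ch := ch) (cv := cv) (cvia := cvia)
    ((z - ζ).natAbs) ζ z x' a.2.1 hζ1 hζ2 hz1 hz2 rfl
  obtain ⟨R1, hR1, hr1⟩ := walk_trans (c := ecost ch cv cvia) hP1 hP2
  obtain ⟨R2, hR2, hr2⟩ := walk_trans (c := ecost ch cv cvia) hR1 hP3
  calc gdistA (Adj l) (ecost ch cv cvia) a (x', a.2.1, z) ≤ wcost (ecost ch cv cvia) R2 :=
        gdist_le hch hcv hcvia hR2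
    _ = _ := by rw [hr2, hr1, hc1, hc2, hc3]

end Walks

end Aux


/-- With `d_z = dist (r, (x_s, y_r, z))` and `e_z = dist (s, (x_r, y_s, z))`,
the distance `dist (r, s)` equals the minimum over `z ∈ {1, …, l}` of the smaller of
`d_z + c↕_z·|y_s − y_r| + c_{z,z_s}` and `e_z + c↕_z·|y_s − y_r| + c_{z,z_r}`. -/
theorem stmt5 (l : ℤ) (hl : 1 ≤ l) (ch cv cvia : ℤ → ℝ)
    (hch : ∀ z, 1 ≤ z → z ≤ l → 0 < ch z)
    (hcv : ∀ z, 1 ≤ z → z ≤ l → 0 < cv z)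
    (hcvia : ∀ z, 1 ≤ z → z < l → 0 < cvia z)
    (r s : Vtx) (hr : 1 ≤ r.2.2 ∧ r.2.2 ≤ l) (hs : 1 ≤ s.2.2 ∧ s.2.2 ≤ l) :
    IsLeast
      { m : ℝ | ∃ z : ℤ, 1 ≤ z ∧ z ≤ l ∧
          m = min
            (gdistA (Adj l) (ecost ch cv cvia) r (s.1, r.2.1, z) +
              cv z * |(s.2.1 : ℝ) - (r.2.1 : ℝ)| + cviaSum cvia z s.2.2)
            (gdistA (Adj l) (ecost ch cv cvia) s (r.1, s.2.1, z) +
              cv z * |(s.2.1 : ℝ) - (r.2.1 : ℝ)| + cviaSum cvia z r.2.2) }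
      (gdistA (Adj l) (ecost ch cv cvia) r s) := by
  obtain ⟨hr1, hr2⟩ := hr
  obtain ⟨hs1, hs2⟩ := hs
  set F : ℤ → ℝ := fun z => min
      (gdistA (Adj l) (ecost ch cv cvia) r (s.1, r.2.1, z) +
        cv z * |(s.2.1 : ℝ) - (r.2.1 : ℝ)| + cviaSum cvia z s.2.2)
      (gdistA (Adj l) (ecost ch cv cvia) s (r.1, s.2.1, z) +
        cv z * |(s.2.1 : ℝ) - (r.2.1 : ℝ)| + cviaSum cvia z r.2.2) with hFdef
  -- Easy direction, first branch
  have easy1 : ∀ z, 1 ≤ z → z ≤ l →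
      gdistA (Adj l) (ecost ch cv cvia) r s ≤
        gdistA (Adj l) (ecost ch cv cvia) r (s.1, r.2.1, z) +
          cv z * |(s.2.1 : ℝ) - (r.2.1 : ℝ)| + cviaSum cvia z s.2.2 := by
    intro z h1 h2
    obtain ⟨P2, hP2, hc2⟩ := exists_vwalk (ch := ch) (cvia := cvia) h1 h2
      ((s.2.1 - r.2.1).natAbs) r.2.1 s.2.1 s.1 rfl
    obtain ⟨P3, hP3, hc3⟩ := exists_viawalk (ch := ch) (cv := cv) (cvia := cvia)
      ((s.2.2 - z).natAbs) z s.2.2 s.1 s.2.1 h1 h2 hs1 hs2 rfl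
    have hP3' : IsWalkA (Adj l) P3 (s.1, s.2.1, z) s := hP3
    have hne1 : ∃ P, IsWalkA (Adj l) P r (s.1, r.2.1, z) :=
      exists_walk_any (v := (s.1, r.2.1, z)) hr1 hr2 h1 h2
    have hne2 : ∃ P, IsWalkA (Adj l) P r (s.1, s.2.1, z) :=
      exists_walk_any (v := (s.1, s.2.1, z)) hr1 hr2 h1 h2
    have t1 := gdist_le_add hch hcv hcvia hP3' hne2
    have t2 := gdist_le_add hch hcv hcvia hP2 hne1
    rw [hc3] at t1
    rw [hc2] at t2
    have habs : |(r.2.1 : ℝ) - (s.2.1 : ℝ)| = |(s.2.1 : ℝ) - (r.2.1 : ℝ)| := abs_sub_comm _ _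
    rw [habs] at t2
    linarith
  -- Easy direction, second branch
  have easy2 : ∀ z, 1 ≤ z → z ≤ l →
      gdistA (Adj l) (ecost ch cv cvia) r s ≤
        gdistA (Adj l) (ecost ch cv cvia) s (r.1, s.2.1, z) +
          cv z * |(s.2.1 : ℝ) - (r.2.1 : ℝ)| + cviaSum cvia z r.2.2 := by
    intro z h1 h2
    obtain ⟨P2, hP2, hc2⟩ := exists_vwalk (ch := ch) (cvia := cvia) h1 h2
      ((r.2.1 - s.2.1).natAbs) s.2.1 r.2.1 r.1 rfl
    obtain ⟨P3, hP3, hc3⟩ := exists_viawalk (ch := ch) (cv := cv) (cvia := cvia)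
      ((r.2.2 - z).natAbs) z r.2.2 r.1 r.2.1 h1 h2 hr1 hr2 rfl
    have hP3' : IsWalkA (Adj l) P3 (r.1, r.2.1, z) r := hP3
    have hne1 : ∃ P, IsWalkA (Adj l) P s (r.1, s.2.1, z) :=
      exists_walk_any (v := (r.1, s.2.1, z)) hs1 hs2 h1 h2
    have hne2 : ∃ P, IsWalkA (Adj l) P s (r.1, r.2.1, z) :=
      exists_walk_any (v := (r.1, r.2.1, z)) hs1 hs2 h1 h2
    have t1 := gdist_le_add hch hcv hcvia hP3' hne2
    have t2 := gdist_le_add hch hcv hcvia hP2 hne1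
    rw [hc3] at t1
    rw [hc2] at t2
    have hsym := gdist_symm (l := l) (ch := ch) (cv := cv) (cvia := cvia) r s
    linarith
  have heasy : ∀ z, 1 ≤ z → z ≤ l → gdistA (Adj l) (ecost ch cv cvia) r s ≤ F z :=
    fun z h1 h2 => le_min (easy1 z h1 h2) (easy2 z h1 h2)
  -- choose the minimizing layer
  obtain ⟨z₀, hz₀mem, hz₀min⟩ := Finset.exists_min_image (Finset.Icc 1 l) F
    ⟨1, Finset.mem_Icc.mpr ⟨le_refl 1, hl⟩⟩
  rw [Finset.mem_Icc] at hz₀mem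
  -- Hard direction
  have hard : ∀ P, IsWalkA (Adj l) P r s → F z₀ ≤ wcost (ecost ch cv cvia) P := by
    intro P hP
    by_cases hy : r.2.1 = s.2.1
    · have e1 : ((s.1 : ℤ), r.2.1, s.2.2) = s := by rw [hy]
      have habs0 : |(s.2.1 : ℝ) - (r.2.1 : ℝ)| = 0 := by rw [hy, sub_self, abs_zero]
      have hFz : F s.2.2 ≤ gdistA (Adj l) (ecost ch cv cvia) r s := by
        calc F s.2.2 ≤ gdistA (Adj l) (ecost ch cv cvia) r (s.1, r.2.1, s.2.2) +
              cv s.2.2 * |(s.2.1 : ℝ) - (r.2.1 : ℝ)| + cviaSum cvia s.2.2 s.2.2 :=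
            min_le_left _ _
          _ = gdistA (Adj l) (ecost ch cv cvia) r s := by
            rw [e1, habs0, cviaSum_self, mul_zero, add_zero, add_zero]
      calc F z₀ ≤ F s.2.2 := hz₀min s.2.2 (Finset.mem_Icc.mpr ⟨hs1, hs2⟩)
        _ ≤ gdistA (Adj l) (ecost ch cv cvia) r s := hFz
        _ ≤ wcost (ecost ch cv cvia) P := gdist_le hch hcv hcvia hP
    · obtain ⟨z, ζ1, ζ2, xp, hzr, hζ1r, hζ2r, main, C⟩ :=
        key_lb hch hcv hcvia P r s hP.2.1 hP.2.2.1 hP.2.2.2 hs1 hs2 hy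
      have hvC := C (cv z) (hcv z hzr.1 hzr.2).le le_rfl
      have habs : |(s.2.1 : ℝ) - (r.2.1 : ℝ)| = |(r.2.1 : ℝ) - (s.2.1 : ℝ)| :=
        abs_sub_comm _ _
      have htri0 : |(r.1 : ℝ) - (s.1 : ℝ)| ≤ |(r.1 : ℝ) - (xp : ℝ)| + |(xp : ℝ) - (s.1 : ℝ)| :=
        abs_sub_le _ _ _
      have hvvnn : 0 ≤ vvcost cv P := vvcost_nonneg hcv P hP.2.1
      have hFle : F z ≤ wcost (ecost ch cv cvia) P := by
        by_cases h12 : ch ζ1 ≤ ch ζ2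
        · have b1 := gdist_le_L hch hcv hcvia hr1 hr2 hζ1r.1 hζ1r.2 hzr.1 hzr.2 s.1
          have tri2 : cviaSum cvia z s.2.2 ≤ cviaSum cvia z ζ2 + cviaSum cvia ζ2 s.2.2 :=
            cviaSum_triangle hcvia hzr.1 hzr.2 hs1 hs2 hζ2r.1 hζ2r.2
          have m1 : ch ζ1 * |(r.1 : ℝ) - (s.1 : ℝ)| ≤
              ch ζ1 * (|(r.1 : ℝ) - (xp : ℝ)| + |(xp : ℝ) - (s.1 : ℝ)|) :=
            mul_le_mul_of_nonneg_left htri0 (hch ζ1 hζ1r.1 hζ1r.2).le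
          have m2 : ch ζ1 * |(xp : ℝ) - (s.1 : ℝ)| ≤ ch ζ2 * |(xp : ℝ) - (s.1 : ℝ)| :=
            mul_le_mul_of_nonneg_right h12 (abs_nonneg _)
          calc F z ≤ gdistA (Adj l) (ecost ch cv cvia) r (s.1, r.2.1, z) +
                cv z * |(s.2.1 : ℝ) - (r.2.1 : ℝ)| + cviaSum cvia z s.2.2 := min_le_left _ _
            _ ≤ wcost (ecost ch cv cvia) P := by
                rw [habs]
                rw [mul_add] at m1
                linarith
        · push_neg at h12
          have b2 := gdist_le_L hch hcv hcvia hs1 hs2 hζ2r.1 hζ2r.2 hzr.1 hzr.2 r.1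
          have tri2 : cviaSum cvia z r.2.2 ≤ cviaSum cvia z ζ1 + cviaSum cvia ζ1 r.2.2 :=
            cviaSum_triangle hcvia hzr.1 hzr.2 hr1 hr2 hζ1r.1 hζ1r.2
          have habs2 : |(s.1 : ℝ) - (r.1 : ℝ)| = |(r.1 : ℝ) - (s.1 : ℝ)| := abs_sub_comm _ _
          have m1 : ch ζ2 * |(r.1 : ℝ) - (s.1 : ℝ)| ≤
              ch ζ2 * (|(r.1 : ℝ) - (xp : ℝ)| + |(xp : ℝ) - (s.1 : ℝ)|) :=
            mul_le_mul_of_nonneg_left htri0 (hch ζ2 hζ2r.1 hζ2r.2).le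
          have m2 : ch ζ2 * |(r.1 : ℝ) - (xp : ℝ)| ≤ ch ζ1 * |(r.1 : ℝ) - (xp : ℝ)| :=
            mul_le_mul_of_nonneg_right h12.le (abs_nonneg _)
          have c1 := cviaSum_comm (cvia := cvia) s.2.2 ζ2
          have c2 := cviaSum_comm (cvia := cvia) z ζ1
          have c3 := cviaSum_comm (cvia := cvia) ζ1 r.2.2
          have c4 := cviaSum_comm (cvia := cvia) ζ2 z
          calc F z ≤ gdistA (Adj l) (ecost ch cv cvia) s (r.1, s.2.1, z) +
                cv z * |(s.2.1 : ℝ) - (r.2.1 : ℝ)| + cviaSum cvia z r.2.2 := min_le_right _ _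
            _ ≤ wcost (ecost ch cv cvia) P := by
                rw [habs]
                rw [habs2] at b2
                rw [mul_add] at m1
                linarith
      calc F z₀ ≤ F z := hz₀min z (Finset.mem_Icc.mpr ⟨hzr.1, hzr.2⟩)
        _ ≤ wcost (ecost ch cv cvia) P := hFle
  have hwalkset : ∃ P, IsWalkA (Adj l) P r s := exists_walk_any hr1 hr2 hs1 hs2
  have hge : F z₀ ≤ gdistA (Adj l) (ecost ch cv cvia) r s := le_gdist hwalkset hard
  have heq : gdistA (Adj l) (ecost ch cv cvia) r s = F z₀ :=
    le_antisymm (heasy z₀ hz₀mem.1 hz₀mem.2) hge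
  constructor
  · exact ⟨z₀, hz₀mem.1, hz₀mem.2, heq⟩
  · rintro m ⟨z, h1, h2, rfl⟩
    exact heasy z h1 h2
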